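/- Let CUT₁ = {e₁ᵢ : i = 1,…,n} and CUT₂ = {e₂ᵢ : i = 1,…,n} be two minimum cuts between s and t in a finite directed acyclic graph, and let P₁, …, P_n be n edge-disjoint s–t paths with P_i ∩ CUT₁ = {e₁ᵢ} and P_i ∩ CUT₂ = {e₂ᵢ}. Then the edge set {minord(e₁ᵢ, e₂ᵢ) : i = 1,…,n}, where minord picks the upstream of the two edges on P_i, is also a minimum cut between s and t. -/

import Mathlib

open Finset

/-- Consecutive edges in the list match head-to-tail. -/
def EChain {V E : Type*} (tl hd : E → V) (p : List E) : Prop :=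
  p.Chain' (fun d e => hd d = tl e)

/-- A (nonempty) directed path of edges starting at node `s`. -/
def PathFrom {V E : Type*} (tl hd : E → V) (s : V) (p : List E) : Prop :=
  p ≠ [] ∧ EChain tl hd p ∧ ∀ e ∈ p.head?, tl e = s

/-- The directed graph is acyclic: no nonempty edge-chain returns to its start. -/
def Acyclic {V E : Type*} (tl hd : E → V) : Prop :=
  ∀ p : List E, p ≠ [] → EChain tl hd p →
    ∀ d ∈ p.head?, ∀ e ∈ p.getLast?, hd e ≠ tl d

/-- `B` separates the edge set `A` from `s`: every directed path from `s`
ending with an edge of `A` passes through an edge of `B` (i.e. `B` is a cut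
between `s` and `A`). -/
def Separates {V E : Type*} (tl hd : E → V) (s : V) (A B : Finset E) : Prop :=
  ∀ p : List E, PathFrom tl hd s p → (∃ e ∈ p.getLast?, e ∈ A) → ∃ b ∈ B, b ∈ p

/-- The minimum cut capacity between `s` and the edge set `A`. -/
noncomputable def mincut {V E : Type*} [Fintype E] (tl hd : E → V) (s : V)
    (A : Finset E) : ℕ :=
  sInf {n | ∃ B : Finset E, Separates tl hd s A B ∧ B.card = n}

/-- `B` is a minimum cut between `s` and the edge set `A`. -/
def IsMinCut {V E : Type*} [Fintype E] (tl hd : E → V) (s : V) (A B : Finset E) : Prop :=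
  Separates tl hd s A B ∧ B.card = mincut tl hd s A

/-- An edge set is regular if its cardinality equals its minimum cut capacity from `s`. -/
def Regular {V E : Type*} [Fintype E] (tl hd : E → V) (s : V) (A : Finset E) : Prop :=
  A.card = mincut tl hd s A

/-- `A ∼ A'`: the two edge sets have a common minimum cut from `s`. -/
def EquivSets {V E : Type*} [Fintype E] (tl hd : E → V) (s : V) (A A' : Finset E) : Prop :=
  ∃ C : Finset E, IsMinCut tl hd s A C ∧ IsMinCut tl hd s A' C

/-- `A₁ ≺ A₂`: `|A₁| < |A₂|` and some minimum cut between `s` and `A₂`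
also separates `A₁` from `s`. -/
def Dominates {V E : Type*} [Fintype E] (tl hd : E → V) (s : V) (A₁ A₂ : Finset E) : Prop :=
  A₁.card < A₂.card ∧
    ∃ C : Finset E, IsMinCut tl hd s A₂ C ∧ Separates tl hd s A₁ C

/-- A directed path of edges from node `s` to node `t`. -/
def NPathFromTo {V E : Type*} (tl hd : E → V) (s t : V) (p : List E) : Prop :=
  PathFrom tl hd s p ∧ ∀ e ∈ p.getLast?, hd e = t

/-- `B` is a cut between the nodes `s` and `t`. -/
def NSeparates {V E : Type*} (tl hd : E → V) (s t : V) (B : Finset E) : Prop :=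
  ∀ p : List E, NPathFromTo tl hd s t p → ∃ b ∈ B, b ∈ p

/-- The minimum cut capacity between the nodes `s` and `t`. -/
noncomputable def nmincut {V E : Type*} [Fintype E] (tl hd : E → V) (s t : V) : ℕ :=
  sInf {n | ∃ B : Finset E, NSeparates tl hd s t B ∧ B.card = n}

/-- `B` is a minimum cut between the nodes `s` and `t`. -/
def IsNodeMinCut {V E : Type*} [Fintype E] (tl hd : E → V) (s t : V) (B : Finset E) : Prop :=
  NSeparates tl hd s t B ∧ B.card = nmincut tl hd s t

/-- `d ≤ e` for edges: there is a directed path starting with `d` and ending with `e`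
(in particular `d ≤ d`). -/
def EdgeLe {V E : Type*} (tl hd : E → V) (d e : E) : Prop :=
  ∃ p : List E, EChain tl hd p ∧ p.head? = some d ∧ p.getLast? = some e

/-- A family of pairwise edge-disjoint paths. -/
def EdgeDisjoint {E : Type*} {n : ℕ} (P : Fin n → List E) : Prop :=
  ∀ i j, i ≠ j → List.Disjoint (P i) (P j)

/-- The primary minimum cut between nodes `s` and `t`: a minimum cut separating
every minimum cut between `s` and `t` from `s`. -/
def IsPrimaryNodeMinCut {V E : Type*} [Fintype E] (tl hd : E → V) (s t : V)
    (C : Finset E) : Prop :=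
  IsNodeMinCut tl hd s t C ∧
    ∀ C' : Finset E, IsNodeMinCut tl hd s t C' → Separates tl hd s C' C

/-- The primary minimum cut between `s` and an edge set `A`. -/
def IsPrimaryMinCut {V E : Type*} [Fintype E] (tl hd : E → V) (s : V)
    (A C : Finset E) : Prop :=
  IsMinCut tl hd s A C ∧
    ∀ C' : Finset E, IsMinCut tl hd s A C' → Separates tl hd s C' C

/-- The equivalence class (within the collection `𝒜`) of the wiretap set `A`
under the relation `∼`. -/
def ClassOf {V E : Type*} [Fintype E] (tl hd : E → V) (s : V)
    (𝒜 : Finset (Finset E)) (A : Finset E) : Set (Finset E) :=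
  {A' | A' ∈ 𝒜 ∧ EquivSets tl hd s A A'}

/-- Domination amongst (distinct) equivalence classes: some common minimum cut of all
the sets in `C₂` separates every set in `C₁` from `s`. -/
def ClDominates {V E : Type*} [Fintype E] (tl hd : E → V) (s : V)
    (C₁ C₂ : Set (Finset E)) : Prop :=
  C₁ ≠ C₂ ∧ ∃ CUT : Finset E,
    (∀ A ∈ C₂, IsMinCut tl hd s A CUT) ∧ (∀ A ∈ C₁, Separates tl hd s A CUT)


section Aux

variable {V E : Type*} {tl hd : E → V}

lemma edgeLe_of_split {p u v : List E} {d e : E}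
    (hp : EChain tl hd p) (hsplit : p = u ++ d :: v) (he : e ∈ d :: v) :
    EdgeLe tl hd d e := by
  obtain ⟨w, x, hwx⟩ := List.append_of_mem he
  refine ⟨w ++ [e], ?_, ?_, List.getLast?_concat⟩
  · exact hp.infix ⟨u, x, by rw [hsplit, hwx]; simp⟩
  · cases w with
    | nil =>
      simp only [List.nil_append] at hwx
      obtain ⟨rfl, -⟩ := List.cons.inj hwx
      simp
    | cons a w' =>
      have hda : d = a := by
        have := congrArg List.head? hwx
        simpa using this
      simp [hda]

lemma edgeLe_antisymm (hacy : Acyclic tl hd) {d e : E}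
    (h1 : EdgeLe tl hd d e) (h2 : EdgeLe tl hd e d) : d = e := by
  obtain ⟨p, hp, hph, hpl⟩ := h1
  obtain ⟨q, hq, hqh, hql⟩ := h2
  cases q with
  | nil => simp at hqh
  | cons e' q' =>
    have hee : e' = e := by simpa using hqh
    rw [← hee] at hpl
    cases q' with
    | nil =>
      rw [← hee]
      exact (by simpa using hql : e' = d).symm
    | cons y q'' =>
      exfalso
      have hlink : hd e' = tl y := (List.isChain_cons_cons.1 hq).1
      have hqt : EChain tl hd (y :: q'') := (List.isChain_cons_cons.1 hq).2
      have hc : EChain tl hd (p ++ y :: q'') := by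
        refine List.IsChain.append hp hqt ?_
        intro a ha b hb
        rw [hpl] at ha
        obtain rfl : e' = a := by simpa using ha
        obtain rfl : y = b := by simpa using hb
        exact hlink
      cases p with
      | nil => simp at hph
      | cons d' p' =>
        have hdd : d' = d := by simpa using hph
        rw [← hdd] at hql
        set ct : List E := p' ++ y :: q'' with hct
        have hctne : ct ≠ [] := by simp [hct]
        have hcc : EChain tl hd (d' :: ct) := hc
        have hctchain : EChain tl hd ct := (List.isChain_cons.1 hcc).2
        have hhead : ct.head? = some (ct.head hctne) := List.head?_eq_head hctne
        have hrel : hd d' = tl (ct.head hctne) :=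
          (List.isChain_cons.1 hcc).1 _ hhead
        have hlast : ct.getLast? = some d' := by
          rw [hct, List.getLast?_append_cons]
          rwa [List.getLast?_cons_cons] at hql
        exact hacy ct hctne hctchain _ hhead d' hlast hrel

lemma replace_tail {s t : V} {Q p l₁ l₂ u v : List E} {c : E}
    (hQ : NPathFromTo tl hd s t Q) (hQd : Q = l₁ ++ c :: l₂)
    (hp : NPathFromTo tl hd s t p) (hpd : p = u ++ c :: v) :
    NPathFromTo tl hd s t (l₁ ++ c :: v) := by
  obtain ⟨⟨-, hQch, hQhd⟩, hQlast⟩ := hQ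
  obtain ⟨⟨-, hpch, -⟩, hplast⟩ := hp
  rw [hQd] at hQch hQhd hQlast
  rw [hpd] at hpch hplast
  have hcv : EChain tl hd (c :: v) := hpch.infix ⟨u, [], by simp⟩
  refine ⟨⟨by simp, ?_, ?_⟩, ?_⟩
  · have h1 : EChain tl hd (l₁ ++ [c]) := hQch.infix ⟨[], l₂, by simp⟩
    have h2 : EChain tl hd v := (List.isChain_cons.1 hcv).2
    have hall : EChain tl hd ((l₁ ++ [c]) ++ v) := by
      refine List.IsChain.append h1 h2 ?_
      intro a ha b hb
      rw [List.getLast?_concat] at ha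
      obtain rfl : c = a := by simpa using ha
      exact (List.isChain_cons.1 hcv).1 b hb
    simpa using hall
  · cases l₁ with
    | nil => simpa using hQhd
    | cons a l₁' => simpa using hQhd
  · intro e he
    rw [List.getLast?_append_cons] at he
    apply hplast
    rw [List.getLast?_append_cons]
    exact he

end Aux

/-- given two minimum cuts between `s` and `t` intersecting `n`
edge-disjoint `s`–`t` paths in edges `e₁ᵢ`, `e₂ᵢ`, the edge set
`{minord(e₁ᵢ, e₂ᵢ) : i}` (picking the upstream of the two on each path) is also
a minimum cut between `s` and `t`. -/
theorem minord_minCut {V E : Type*} [Fintype E] [DecidableEq E]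
    (tl hd : E → V) (s t : V)
    (hacy : Acyclic tl hd) (hsrc : ∀ e : E, hd e ≠ s) (hts : t ≠ s)
    (CUT₁ CUT₂ : Finset E)
    (h₁ : IsNodeMinCut tl hd s t CUT₁) (h₂ : IsNodeMinCut tl hd s t CUT₂)
    (P : Fin (nmincut tl hd s t) → List E)
    (hP : ∀ i, NPathFromTo tl hd s t (P i)) (hdisj : EdgeDisjoint P)
    (e₁ e₂ : Fin (nmincut tl hd s t) → E)
    (he₁ : ∀ i, e₁ i ∈ P i ∧ ∀ e ∈ P i, (e ∈ CUT₁ ↔ e = e₁ i))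
    (he₂ : ∀ i, e₂ i ∈ P i ∧ ∀ e ∈ P i, (e ∈ CUT₂ ↔ e = e₂ i))
    (m : Fin (nmincut tl hd s t) → E)
    (hm : ∀ i, (EdgeLe tl hd (e₁ i) (e₂ i) ∧ m i = e₁ i) ∨
               (¬ EdgeLe tl hd (e₁ i) (e₂ i) ∧ m i = e₂ i)) :
    IsNodeMinCut tl hd s t (Finset.image m Finset.univ) := by
  classical
  have hmem : ∀ i, m i ∈ P i := by
    intro i
    rcases hm i with ⟨-, h⟩ | ⟨-, h⟩
    · rw [h]; exact (he₁ i).1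
    · rw [h]; exact (he₂ i).1
  have hminj : Function.Injective m := by
    intro i j hij
    by_contra hne
    exact hdisj i j hne (hmem i) (by rw [hij]; exact hmem j)
  have hinj₁ : Function.Injective e₁ := by
    intro i j hij
    by_contra hne
    exact hdisj i j hne (he₁ i).1 (by rw [hij]; exact (he₁ j).1)
  have hinj₂ : Function.Injective e₂ := by
    intro i j hij
    by_contra hne
    exact hdisj i j hne (he₂ i).1 (by rw [hij]; exact (he₂ j).1)
  have hCUT₁ : CUT₁ = Finset.image e₁ Finset.univ := by
    refine (Finset.eq_of_subset_of_card_le ?_ ?_).symm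
    · intro x hx
      rw [Finset.mem_image] at hx
      obtain ⟨i, -, rfl⟩ := hx
      exact ((he₁ i).2 _ (he₁ i).1).mpr rfl
    · rw [h₁.2, Finset.card_image_of_injective _ hinj₁, Finset.card_univ]
      simp
  have hCUT₂ : CUT₂ = Finset.image e₂ Finset.univ := by
    refine (Finset.eq_of_subset_of_card_le ?_ ?_).symm
    · intro x hx
      rw [Finset.mem_image] at hx
      obtain ⟨i, -, rfl⟩ := hx
      exact ((he₂ i).2 _ (he₂ i).1).mpr rfl
    · rw [h₂.2, Finset.card_image_of_injective _ hinj₂, Finset.card_univ]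
      simp
  constructor
  · -- separation
    intro Q hQ
    by_contra hcon
    push_neg at hcon
    have hnotin : ∀ i, m i ∉ Q := fun i h =>
      hcon (m i) (Finset.mem_image_of_mem m (Finset.mem_univ i)) h
    have main : ∀ N (l₁ : List E) (c : E) (l₂ : List E), l₁.length = N →
        Q = l₁ ++ c :: l₂ → (c ∈ CUT₁ ∨ c ∈ CUT₂) → False := by
      intro N
      induction N using Nat.strong_induction_on with
      | _ N IH =>
        intro l₁ c l₂ hlen hQd hc
        have hcQ : c ∈ Q := by rw [hQd]; simp
        rcases hc with hc | hc
        · -- c ∈ CUT₁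
          rw [hCUT₁, Finset.mem_image] at hc
          obtain ⟨i, -, hci⟩ := hc
          subst hci
          have hmne : m i ≠ e₁ i := fun h => hnotin i (h ▸ hcQ)
          obtain ⟨hle, hmi⟩ | ⟨hnle, hmi⟩ := hm i
          · exact hmne hmi
          · have hcP : e₁ i ∈ P i := (he₁ i).1
            obtain ⟨u, v, hpd⟩ := List.append_of_mem hcP
            have hQ' := replace_tail hQ hQd (hP i) hpd
            obtain ⟨b, hb, hbQ'⟩ := h₂.1 _ hQ'
            rw [List.mem_append, List.mem_cons] at hbQ'
            rcases hbQ' with hbl | rfl | hbv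
            · obtain ⟨w, x, hwx⟩ := List.append_of_mem hbl
              refine IH w.length ?_ w b (x ++ e₁ i :: l₂) rfl ?_ (Or.inr hb)
              · rw [← hlen, hwx]; simp [List.length_append]
              · rw [hQd, hwx]; simp
            · have he : e₁ i = e₂ i := ((he₂ i).2 _ hcP).mp hb
              exact hmne (hmi.trans he.symm)
            · have hb2 : b = e₂ i := ((he₂ i).2 b (by rw [hpd]; simp [hbv])).mp hb
              have hle' : EdgeLe tl hd (e₁ i) b :=
                edgeLe_of_split (hP i).1.2.1 hpd (List.mem_cons_of_mem _ hbv)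
              exact hnle (hb2 ▸ hle')
        · -- c ∈ CUT₂
          rw [hCUT₂, Finset.mem_image] at hc
          obtain ⟨i, -, hci⟩ := hc
          subst hci
          have hmne : m i ≠ e₂ i := fun h => hnotin i (h ▸ hcQ)
          obtain ⟨hle, hmi⟩ | ⟨hnle, hmi⟩ := hm i
          swap
          · exact hmne hmi
          have hcP : e₂ i ∈ P i := (he₂ i).1
          obtain ⟨u, v, hpd⟩ := List.append_of_mem hcP
          have hQ' := replace_tail hQ hQd (hP i) hpd
          obtain ⟨b, hb, hbQ'⟩ := h₁.1 _ hQ'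
          rw [List.mem_append, List.mem_cons] at hbQ'
          rcases hbQ' with hbl | rfl | hbv
          · obtain ⟨w, x, hwx⟩ := List.append_of_mem hbl
            refine IH w.length ?_ w b (x ++ e₂ i :: l₂) rfl ?_ (Or.inl hb)
            · rw [← hlen, hwx]; simp [List.length_append]
            · rw [hQd, hwx]; simp
          · have he : e₂ i = e₁ i := ((he₁ i).2 _ hcP).mp hb
            exact hmne (hmi.trans he.symm)
          · have hb1 : b = e₁ i := ((he₁ i).2 b (by rw [hpd]; simp [hbv])).mp hb
            have hle' : EdgeLe tl hd (e₂ i) b :=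
              edgeLe_of_split (hP i).1.2.1 hpd (List.mem_cons_of_mem _ hbv)
            have heq : e₁ i = e₂ i :=
              edgeLe_antisymm hacy hle (hb1 ▸ hle')
            exact hmne (hmi.trans heq)
    obtain ⟨b, hb, hbQ⟩ := h₁.1 Q hQ
    obtain ⟨l₁, l₂, hdec⟩ := List.append_of_mem hbQ
    exact main l₁.length l₁ b l₂ rfl hdec (Or.inl hb)
  · -- cardinality
    rw [Finset.card_image_of_injective _ hminj, Finset.card_univ]
    simp
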